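/- The map sending a homomorphism h : F(ℤ) → G to its G-sequence ⟨h(φ_δ^{-m}(γ_1))⟩_{m∈ℤ} ∈ G^ℤ is a bijection (indeed a homeomorphism for the product topologies) from Hom(F(ℤ), G) to G^ℤ, and it conjugates the action h ↦ h ∘ φ_δ^{-1} to the shift map on G^ℤ. -/
import Mathlib


/-- The topology of pointwise convergence on `Hom(FreeGroup ℤ, G)`. -/
noncomputable instance homTopZ (G : Type) [Group G] [TopologicalSpace G] :
    TopologicalSpace (FreeGroup ℤ →* G) :=
  TopologicalSpace.induced (fun f => (f : FreeGroup ℤ → G)) Pi.topologicalSpace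

namespace Stmt10Aux

variable (φ : MulAut (FreeGroup ℤ))

/-- `bb φ m = φ^{-m} γ₁`. -/
def bb (m : ℤ) : FreeGroup ℤ := (φ ^ (-m)) (FreeGroup.of (1 : ℤ))

lemma bb_zero : bb φ 0 = FreeGroup.of (1 : ℤ) := by simp [bb]

lemma bb_add_one (m : ℤ) : bb φ (m + 1) = φ⁻¹ (bb φ m) := by
  have h : φ ^ (-(m + 1)) = φ⁻¹ * φ ^ (-m) := by
    rw [← zpow_neg_one, ← zpow_add]; ring_nf
  simp only [bb, h]; rfl

lemma phi_bb (m : ℤ) : φ (bb φ m) = bb φ (m - 1) := by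
  have h := bb_add_one φ (m - 1)
  rw [sub_add_cancel] at h
  rw [h]
  exact (MulEquiv.apply_symm_apply φ _)

def PP : ℕ → FreeGroup ℤ
  | 0 => 1
  | k + 1 => PP k * (bb φ k)⁻¹

def SS : ℕ → FreeGroup ℤ
  | 0 => 1
  | k + 1 => (bb φ (-(k : ℤ) - 1))⁻¹ * SS k

lemma phi_inv_PP (k : ℕ) : φ⁻¹ (PP φ k) = bb φ 0 * PP φ (k + 1) := by
  induction k with
  | zero => simp [PP]
  | succ k ih =>
      have : ((k : ℤ) + 1) = ((k + 1 : ℕ) : ℤ) := by push_cast; ring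
      simp only [PP, map_mul, map_inv, ih, ← bb_add_one, this, mul_assoc]

lemma phi_SS (k : ℕ) : φ (SS φ k) * (bb φ (-1))⁻¹ = SS φ (k + 1) := by
  induction k with
  | zero => simp [SS]
  | succ k ih =>
      have h2 : (-(k : ℤ) - 1) - 1 = -((k + 1 : ℕ) : ℤ) - 1 := by push_cast; ring
      simp only [SS, map_mul, map_inv, phi_bb, mul_assoc, ih, h2]

variable (hφ : ∀ n : ℤ, φ⁻¹ (FreeGroup.of n) =
      if n < 0 then FreeGroup.of (n + 1) * (FreeGroup.of (1 : ℤ))⁻¹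
      else if n = 0 then FreeGroup.of (1 : ℤ)
      else FreeGroup.of (1 : ℤ) * FreeGroup.of (n + 1))

include hφ

lemma of_zero : FreeGroup.of (0 : ℤ) = bb φ (-1) := by
  have h := hφ 0
  rw [if_neg (by norm_num), if_pos rfl] at h
  have := congrArg φ h
  rw [MulAut.apply_inv_self] at this
  rw [this, ← bb_zero φ, phi_bb]
  norm_num

lemma of_pos (k : ℕ) : FreeGroup.of ((k : ℤ) + 1) = PP φ k * bb φ k := by
  induction k with
  | zero => simp [PP, bb_zero]
  | succ k ih =>
      have h := hφ ((k : ℤ) + 1)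
      rw [if_neg (by omega), if_neg (by omega)] at h
      have h2 := congrArg (φ⁻¹ : MulAut (FreeGroup ℤ)) ih
      rw [h, map_mul, phi_inv_PP, ← bb_add_one, ← bb_zero] at h2
      have h3 : ((k : ℤ) + 1 + 1) = ((k + 1 : ℕ) : ℤ) + 1 := by push_cast; ring
      have h4 : ((k : ℤ) + 1) = ((k + 1 : ℕ) : ℤ) := by push_cast; ring
      rw [h3, h4] at h2
      rw [mul_assoc] at h2
      exact mul_left_cancel h2

lemma of_neg (k : ℕ) :
    FreeGroup.of (-(k : ℤ) - 1) = bb φ (-(k : ℤ) - 2) * SS φ (k + 1) := by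
  induction k with
  | zero =>
      have h := hφ (-1)
      rw [if_pos (by norm_num)] at h
      have h2 := congrArg φ h
      rw [MulAut.apply_inv_self] at h2
      norm_num at h2 ⊢
      rw [h2, of_zero φ hφ, ← bb_zero φ, phi_bb, phi_bb]
      norm_num [SS]
  | succ k ih =>
      have h := hφ (-(k : ℤ) - 2)
      rw [if_pos (by omega)] at h
      have h2 := congrArg φ h
      rw [MulAut.apply_inv_self] at h2
      have h3 : (-(k : ℤ) - 2 + 1) = -(k : ℤ) - 1 := by ring
      rw [h3, ih, ← bb_zero φ, map_mul, map_mul, map_inv, phi_bb, phi_bb] at h2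
      have h4 : (-((k + 1 : ℕ) : ℤ) - 1) = -(k : ℤ) - 2 := by push_cast; ring
      have h5 : (-((k + 1 : ℕ) : ℤ) - 2) = (-(k : ℤ) - 2) - 1 := by push_cast; ring
      rw [h4, h5, h2, mul_assoc]
      congr 1
      rw [← phi_SS φ (k + 1)]
      norm_num

variable {G : Type} [Group G]

lemma hom_ext (h h' : FreeGroup ℤ →* G)
    (heq : ∀ m, h (bb φ m) = h' (bb φ m)) : h = h' := by
  have hP : ∀ k, h (PP φ k) = h' (PP φ k) := by
    intro k; induction k with
    | zero => simp [PP]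
    | succ k ih => simp [PP, ih, heq]
  have hS : ∀ k, h (SS φ k) = h' (SS φ k) := by
    intro k; induction k with
    | zero => simp [SS]
    | succ k ih => simp [SS, ih, heq]
  apply FreeGroup.ext_hom
  intro n
  rcases n with n | k
  · cases n with
    | zero =>
        rw [show ((Int.ofNat 0)) = (0 : ℤ) from rfl, of_zero φ hφ]
        exact heq _
    | succ k =>
        rw [show ((Int.ofNat (k + 1))) = ((k : ℤ) + 1) by simp,
          of_pos φ hφ k, map_mul, map_mul, hP, heq]
  · rw [show (Int.negSucc k) = (-(k : ℤ) - 1) by rw [Int.negSucc_eq]; ring,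
      of_neg φ hφ k, map_mul, map_mul, hS, heq]

def pG (u : ℤ → G) : ℕ → G
  | 0 => 1
  | k + 1 => pG u k * (u k)⁻¹

def sG (u : ℤ → G) : ℕ → G
  | 0 => 1
  | k + 1 => (u (-(k : ℤ) - 1))⁻¹ * sG u k

def vG (u : ℤ → G) (n : ℤ) : G :=
  if 0 < n then pG u (n - 1).toNat * u (n - 1) else u (n - 1) * sG u n.natAbs

lemma lift_pos (u : ℤ → G) : ∀ k : ℕ,
    FreeGroup.lift (vG u) (PP φ k) = pG u k ∧
    FreeGroup.lift (vG u) (bb φ k) = u k := by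
  intro k; induction k with
  | zero =>
      refine ⟨by simp [PP, pG], ?_⟩
      rw [show ((0 : ℕ) : ℤ) = (0 : ℤ) from rfl, bb_zero, FreeGroup.lift_apply_of]
      simp [vG, pG]
  | succ k ih =>
      have hP : FreeGroup.lift (vG u) (PP φ (k + 1)) = pG u (k + 1) := by
        simp [PP, pG, ih.1, ih.2]
      refine ⟨hP, ?_⟩
      have h := congrArg (FreeGroup.lift (vG u)) (of_pos φ hφ (k + 1))
      rw [map_mul, FreeGroup.lift_apply_of, hP] at h
      have hv : vG u (((k + 1 : ℕ) : ℤ) + 1) = pG u (k + 1) * u ((k + 1 : ℕ) : ℤ) := by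
        have h1 : (0 : ℤ) < ((k + 1 : ℕ) : ℤ) + 1 := by positivity
        have h2 : (((k + 1 : ℕ) : ℤ) + 1 - 1) = ((k + 1 : ℕ) : ℤ) := by ring
        rw [vG, if_pos h1, h2, Int.toNat_natCast]
      rw [hv] at h
      exact (mul_left_cancel h).symm

lemma lift_neg (u : ℤ → G) : ∀ k : ℕ,
    FreeGroup.lift (vG u) (SS φ k) = sG u k ∧
    FreeGroup.lift (vG u) (bb φ (-(k : ℤ) - 1)) = u (-(k : ℤ) - 1) := by
  intro k; induction k with
  | zero =>
      refine ⟨by simp [SS, sG], ?_⟩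
      have h := congrArg (FreeGroup.lift (vG u)) (of_zero φ hφ)
      rw [FreeGroup.lift_apply_of] at h
      have hv : vG u 0 = u (-1) := by simp [vG, sG]
      rw [hv] at h
      have hc : (-((0 : ℕ) : ℤ) - 1) = (-1 : ℤ) := by norm_num
      rw [hc, ← h]
  | succ k ih =>
      have hS : FreeGroup.lift (vG u) (SS φ (k + 1)) = sG u (k + 1) := by
        simp [SS, sG, ih.1, ih.2]
      refine ⟨hS, ?_⟩
      have h := congrArg (FreeGroup.lift (vG u)) (of_neg φ hφ k)
      rw [map_mul, FreeGroup.lift_apply_of, hS] at h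
      have hv : vG u (-(k : ℤ) - 1) = u (-(k : ℤ) - 2) * sG u (k + 1) := by
        have h1 : ¬ (0 : ℤ) < -(k : ℤ) - 1 := by omega
        have h2 : (-(k : ℤ) - 1).natAbs = k + 1 := by omega
        have h3 : (-(k : ℤ) - 1 - 1) = -(k : ℤ) - 2 := by ring
        rw [vG, if_neg h1, h2, h3]
      rw [hv] at h
      have h4 := mul_right_cancel h
      have hc : (-((k + 1 : ℕ) : ℤ) - 1) = -(k : ℤ) - 2 := by push_cast; ring
      rw [hc]
      exact h4.symm

end Stmt10Aux


open Stmt10Aux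

/-- The map sending a homomorphism `h : F(ℤ) → G` (G a finite discrete group) to its
`G`-sequence `⟨h(φ_δ^{-m}(γ₁))⟩_{m∈ℤ} ∈ G^ℤ` is a bijection — indeed a homeomorphism for
the product topologies — from `Hom(F(ℤ), G)` to `G^ℤ`, and it conjugates the action
`h ↦ h ∘ φ_δ⁻¹` to the shift map on `G^ℤ`. -/
theorem stmt10 (G : Type) [Group G] [Fintype G] [TopologicalSpace G] [DiscreteTopology G]
    (φ : MulAut (FreeGroup ℤ))
    (hφ : ∀ n : ℤ, φ⁻¹ (FreeGroup.of n) =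
      if n < 0 then FreeGroup.of (n + 1) * (FreeGroup.of (1 : ℤ))⁻¹
      else if n = 0 then FreeGroup.of (1 : ℤ)
      else FreeGroup.of (1 : ℤ) * FreeGroup.of (n + 1))
    (Θ : (FreeGroup ℤ →* G) → (ℤ → G))
    (hΘ : ∀ (h : FreeGroup ℤ →* G) (m : ℤ),
      Θ h m = h ((φ ^ (-m)) (FreeGroup.of (1 : ℤ)))) :
    Function.Bijective Θ ∧
    (∃ e : (FreeGroup ℤ →* G) ≃ₜ (ℤ → G), ⇑e = Θ) ∧
    (∀ (h : FreeGroup ℤ →* G) (m : ℤ),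
      Θ (h.comp (φ⁻¹ : MulAut (FreeGroup ℤ)).toMonoidHom) m = Θ h (m + 1)) := by
  have hbij : Function.Bijective Θ := by
    constructor
    · intro h h' hh
      apply hom_ext φ hφ
      intro m
      exact (hΘ h m).symm.trans ((congrFun hh m).trans (hΘ h' m))
    · intro u
      refine ⟨FreeGroup.lift (vG u), funext fun m => ?_⟩
      rw [hΘ]
      show FreeGroup.lift (vG u) (bb φ m) = u m
      rcases m with n | k
      · exact (lift_pos φ hφ u n).2
      · have hc : (Int.negSucc k) = -(k : ℤ) - 1 := by rw [Int.negSucc_eq]; ring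
        rw [hc]
        exact (lift_neg φ hφ u k).2
  refine ⟨hbij, ?_, ?_⟩
  · haveI : ContinuousMul G := ⟨continuous_of_discreteTopology⟩
    have hcont : Continuous Θ := by
      have : Θ = (fun f : FreeGroup ℤ → G => fun m => f (bb φ m)) ∘
          (fun h : FreeGroup ℤ →* G => (h : FreeGroup ℤ → G)) := by
        funext h m; exact hΘ h m
      rw [this]
      exact (continuous_pi fun m => continuous_apply (bb φ m)).comp continuous_induced_dom
    have hclosed : IsClosed (Set.range (fun h : FreeGroup ℤ →* G => (h : FreeGroup ℤ → G))) := by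
      have hr : Set.range (fun h : FreeGroup ℤ →* G => (h : FreeGroup ℤ → G)) =
          {f | f 1 = 1} ∩ ⋂ x, ⋂ y, {f | f (x * y) = f x * f y} := by
        ext f
        constructor
        · rintro ⟨h, rfl⟩
          refine ⟨map_one h, ?_⟩
          simp only [Set.mem_iInter, Set.mem_setOf_eq]
          exact fun x y => map_mul h x y
        · rintro ⟨h1, hm⟩
          simp only [Set.mem_iInter, Set.mem_setOf_eq] at hm h1
          exact ⟨⟨⟨f, h1⟩, fun x y => hm x y⟩, rfl⟩
      rw [hr]
      exact IsClosed.inter (isClosed_eq (continuous_apply 1) continuous_const)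
        (isClosed_iInter fun x => isClosed_iInter fun y =>
          isClosed_eq (continuous_apply _) ((continuous_apply x).mul (continuous_apply y)))
    have hemb : Topology.IsClosedEmbedding (fun h : FreeGroup ℤ →* G => (h : FreeGroup ℤ → G)) :=
      ⟨⟨⟨rfl⟩, fun h h' hh => DFunLike.coe_injective hh⟩, hclosed⟩
    haveI : CompactSpace (FreeGroup ℤ →* G) := hemb.compactSpace
    exact ⟨Continuous.homeoOfEquivCompactToT2 (f := Equiv.ofBijective Θ hbij) hcont, rfl⟩
  · intro h m
    rw [hΘ, hΘ]
    show h.comp (φ⁻¹ : MulAut (FreeGroup ℤ)).toMonoidHom (bb φ m) = h (bb φ (m + 1))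
    rw [bb_add_one, MonoidHom.comp_apply]
    rfl
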